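/- Let r ≥ 3. In the 2-fold deleted join (M_r)^{*2}_Δ, the facets of dimension 2r−2 (cardinality 2r−1) are exactly the faces obtained by choosing one row i ∈ {1,2}, taking all r vertices {w_1,…,w_r} of the last block in row i, and in the other row choosing one vertex from each of the sets {v_j^1,…,v_j^r} for j = 1,…,r−1. In particular the number of facets of dimension 2r−2 equals 2·r^{r−1}. -/
import Mathlib


/-- Independence in the matroid `M_r` (ground set `Fin r × Fin r`; `(i,j)` is `v_{i+1}^{j+1}`
for `i < r-1` and `w_{j+1}` for `i = r-1`). -/
def MrIndep (r : ℕ) (A : Finset (Fin r × Fin r)) : Prop :=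
  A.card ≤ r ∧ ∀ i : Fin r, (i : ℕ) < r - 1 → (A.filter (fun p => p.1 = i)).card ≤ 1

/-- A face of the `2`-fold deleted join `(M_r)^{*2}_Δ`: a pair of disjoint independent sets. -/
def Face2 (r : ℕ) (p : Finset (Fin r × Fin r) × Finset (Fin r × Fin r)) : Prop :=
  MrIndep r p.1 ∧ MrIndep r p.2 ∧ Disjoint p.1 p.2

/-- A facet of `(M_r)^{*2}_Δ`: a face maximal under componentwise inclusion. -/
def Facet2 (r : ℕ) (p : Finset (Fin r × Fin r) × Finset (Fin r × Fin r)) : Prop :=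
  Face2 r p ∧ ∀ q, Face2 r q → p.1 ⊆ q.1 → p.2 ⊆ q.2 → q = p

/-- The last block `{w_1, …, w_r}` of the ground set. -/
def lastBlock (r : ℕ) : Finset (Fin r × Fin r) :=
  Finset.univ.filter (fun p => (p.1 : ℕ) = r - 1)

/-- The face consisting of one chosen vertex `(j, f j)` in each of the first `r-1` blocks. -/
def blockChoice (r : ℕ) (f : Fin r → Fin r) : Finset (Fin r × Fin r) :=
  (Finset.univ.filter (fun j : Fin r => (j : ℕ) < r - 1)).image (fun j => (j, f j))

section Aux
variable {r : ℕ}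

lemma mem_lastBlock {x : Fin r × Fin r} : x ∈ lastBlock r ↔ (x.1 : ℕ) = r - 1 := by
  simp [lastBlock]

lemma mem_blockChoice {f : Fin r → Fin r} {x : Fin r × Fin r} :
    x ∈ blockChoice r f ↔ (x.1 : ℕ) < r - 1 ∧ x.2 = f x.1 := by
  simp only [blockChoice, Finset.mem_image, Finset.mem_filter, Finset.mem_univ, true_and]
  constructor
  · rintro ⟨j, hj, rfl⟩; exact ⟨hj, rfl⟩
  · rintro ⟨h1, h2⟩; exact ⟨x.1, h1, by rw [← h2]⟩

lemma lastBlock_eq (hr : 1 ≤ r) :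
    lastBlock r = Finset.univ.image (fun k : Fin r => ((⟨r - 1, by omega⟩ : Fin r), k)) := by
  ext ⟨a, b⟩
  simp only [mem_lastBlock, Finset.mem_image, Finset.mem_univ, true_and, Prod.mk.injEq]
  constructor
  · intro h; exact ⟨b, Fin.ext h.symm, rfl⟩
  · rintro ⟨k, h1, rfl⟩; rw [← h1]

lemma lastBlock_card (hr : 1 ≤ r) : (lastBlock r).card = r := by
  rw [lastBlock_eq hr, Finset.card_image_of_injective _ (fun a b h => by
    simpa using congrArg Prod.snd h)]
  simp

lemma Tcard (hr : 1 ≤ r) :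
    (Finset.univ.filter (fun j : Fin r => (j : ℕ) < r - 1)).card = r - 1 := by
  have hL : Finset.univ.filter (fun j : Fin r => ¬ (j : ℕ) < r - 1)
      = {(⟨r - 1, by omega⟩ : Fin r)} := by
    ext j
    simp only [Finset.mem_filter, Finset.mem_univ, true_and, Finset.mem_singleton, not_lt]
    have := j.isLt
    constructor
    · intro h; exact Fin.ext (show (j:ℕ) = r - 1 by omega)
    · rintro rfl; exact le_refl _
  have := Finset.card_filter_add_card_filter_not (s := (Finset.univ : Finset (Fin r)))
    (p := fun j : Fin r => (j : ℕ) < r - 1)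
  rw [hL] at this
  simp only [Finset.card_singleton, Finset.card_univ, Fintype.card_fin] at this
  omega

lemma blockChoice_card (hr : 1 ≤ r) (f : Fin r → Fin r) : (blockChoice r f).card = r - 1 := by
  rw [blockChoice, Finset.card_image_of_injective _ (fun a b h => by
    simpa using congrArg Prod.fst h), Tcard hr]

lemma blockChoice_congr {f g : Fin r → Fin r} (h : ∀ j : Fin r, (j : ℕ) < r - 1 → f j = g j) :
    blockChoice r f = blockChoice r g := by
  unfold blockChoice
  apply Finset.image_congr
  intro j hj
  simp only [Finset.mem_coe, Finset.mem_filter] at hj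
  dsimp only
  rw [h j hj.2]

lemma indep_lastBlock (hr : 1 ≤ r) : MrIndep r (lastBlock r) := by
  refine ⟨le_of_eq (lastBlock_card hr), fun i hi => ?_⟩
  have : (lastBlock r).filter (fun p => p.1 = i) = ∅ := by
    ext x
    simp only [Finset.mem_filter, Finset.notMem_empty, iff_false, not_and]
    intro hx
    rw [mem_lastBlock] at hx
    rintro rfl; omega
  simp [this]

lemma indep_blockChoice (hr : 1 ≤ r) (f : Fin r → Fin r) : MrIndep r (blockChoice r f) := by
  refine ⟨by rw [blockChoice_card hr]; omega, fun i hi => ?_⟩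
  apply Finset.card_le_one.2
  intro a ha b hb
  simp only [Finset.mem_filter, mem_blockChoice] at ha hb
  have : a = (i, f i) := by
    obtain ⟨⟨_, h2⟩, h3⟩ := ha
    exact Prod.ext h3 (by rw [h2, h3])
  have hb' : b = (i, f i) := by
    obtain ⟨⟨_, h2⟩, h3⟩ := hb
    exact Prod.ext h3 (by rw [h2, h3])
  rw [this, hb']

lemma disjoint_lb_bc (f : Fin r → Fin r) : Disjoint (lastBlock r) (blockChoice r f) := by
  rw [Finset.disjoint_left]
  intro x h1 h2
  rw [mem_lastBlock] at h1
  rw [mem_blockChoice] at h2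
  omega

end Aux
section Facets
variable {r : ℕ}

lemma facet_swap {p} (h : Facet2 r p) : Facet2 r (p.2, p.1) := by
  obtain ⟨⟨h1, h2, h3⟩, hmax⟩ := h
  refine ⟨⟨h2, h1, h3.symm⟩, fun q hq hq1 hq2 => ?_⟩
  have := hmax (q.2, q.1) ⟨hq.2.1, hq.1, hq.2.2.symm⟩ hq2 hq1
  have e1 : q.2 = p.1 := congrArg Prod.fst this
  have e2 : q.1 = p.2 := congrArg Prod.snd this
  exact Prod.ext e2 e1

lemma facet_no_extend {p} (h : Facet2 r p) {x} (hx1 : x ∉ p.1) (hx2 : x ∉ p.2)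
    (hind : MrIndep r (insert x p.1)) : False := by
  have hface : Face2 r (insert x p.1, p.2) :=
    ⟨hind, h.1.2.1, Finset.disjoint_insert_left.2 ⟨hx2, h.1.2.2⟩⟩
  have := h.2 (insert x p.1, p.2) hface (Finset.subset_insert _ _) le_rfl
  have : insert x p.1 = p.1 := congrArg Prod.fst this
  exact hx1 (this ▸ Finset.mem_insert_self x p.1)

lemma indep_insert_last (hr : 1 ≤ r) {A : Finset (Fin r × Fin r)} (hA : MrIndep r A)
    (hcard : A.card < r) {x : Fin r × Fin r} (hx : (x.1 : ℕ) = r - 1) (hxA : x ∉ A) :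
    MrIndep r (insert x A) := by
  constructor
  · rw [Finset.card_insert_of_notMem hxA]; omega
  · intro i hi
    rw [Finset.filter_insert]
    split
    · next hcond => rw [hcond] at hx; omega
    · exact hA.2 i hi

lemma indep_insert_row {A : Finset (Fin r × Fin r)} (hA : MrIndep r A) (hcard : A.card < r)
    {x : Fin r × Fin r} (hxA : x ∉ A)
    (hrow : A.filter (fun p => p.1 = x.1) = ∅) : MrIndep r (insert x A) := by
  constructor
  · rw [Finset.card_insert_of_notMem hxA]; omega
  · intro i hi
    rw [Finset.filter_insert]
    split
    · next hcond =>
      have : A.filter (fun p => p.1 = i) = ∅ := by rw [← hcond]; exact hrow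
      rw [this]
      simp
    · exact hA.2 i hi

/-- If a facet's first part has card < r, it hits every early row. -/
lemma facet_hits (hr : 3 ≤ r) {p} (h : Facet2 r p) (hcard : p.1.card < r)
    {j : Fin r} (hj : (j : ℕ) < r - 1) :
    (p.1.filter (fun x => x.1 = j)).Nonempty := by
  rw [Finset.nonempty_iff_ne_empty]
  intro hemp
  -- find k with (j,k) ∉ p.2
  have h2 : (p.2.filter (fun x => x.1 = j)).card ≤ 1 := h.1.2.1.2 j hj
  have : ∃ k : Fin r, (j, k) ∉ p.2 := by
    by_contra hc
    push_neg at hc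
    have hsub : Finset.univ.image (fun k : Fin r => ((j, k) : Fin r × Fin r))
        ⊆ p.2.filter (fun x => x.1 = j) := by
      intro y hy
      simp only [Finset.mem_image, Finset.mem_univ, true_and] at hy
      obtain ⟨k, rfl⟩ := hy
      exact Finset.mem_filter.2 ⟨hc k, rfl⟩
    have hcardim : (Finset.univ.image (fun k : Fin r => ((j, k) : Fin r × Fin r))).card = r := by
      rw [Finset.card_image_of_injective _ (fun a b hab => by
        simpa using congrArg Prod.snd hab)]
      simp
    have := Finset.card_le_card hsub
    omega
  obtain ⟨k, hk⟩ := this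
  have hnotin1 : ((j, k) : Fin r × Fin r) ∉ p.1 := by
    intro hmem
    have : ((j, k) : Fin r × Fin r) ∈ p.1.filter (fun x => x.1 = j) :=
      Finset.mem_filter.2 ⟨hmem, rfl⟩
    rw [hemp] at this
    exact absurd this (Finset.notMem_empty _)
  exact facet_no_extend h hnotin1 hk (indep_insert_row h.1.1 hcard hnotin1 hemp)

/-- If a facet's first part has card < r, the last row is fully covered. -/
lemma facet_covers (hr : 3 ≤ r) {p} (h : Facet2 r p) (hcard : p.1.card < r) (k : Fin r) :
    ((⟨r - 1, by omega⟩ : Fin r), k) ∈ p.1 ∪ p.2 := by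
  by_contra hc
  rw [Finset.mem_union] at hc
  push_neg at hc
  exact facet_no_extend h hc.1 hc.2
    (indep_insert_last (by omega) h.1.1 hcard (by simp) hc.1)

end Facets
section Main
variable {r : ℕ}

lemma facet_pair (hr : 3 ≤ r) (f : Fin r → Fin r) :
    Facet2 r (lastBlock r, blockChoice r f) := by
  have hr1 : 1 ≤ r := by omega
  refine ⟨⟨indep_lastBlock hr1, indep_blockChoice hr1 f, disjoint_lb_bc f⟩, ?_⟩
  rintro ⟨q1, q2⟩ ⟨hq1, hq2, hqd⟩ hs1 hs2
  simp only at hs1 hs2 ⊢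
  have e1 : q1 = lastBlock r := by
    refine (Finset.eq_of_subset_of_card_le hs1 ?_).symm
    rw [lastBlock_card hr1]; exact hq1.1
  have e2 : q2 = blockChoice r f := by
    apply Finset.Subset.antisymm _ hs2
    intro x hx
    have hx1 : (x.1 : ℕ) < r - 1 := by
      have hle : (x.1 : ℕ) ≤ r - 1 := by have := x.1.isLt; omega
      rcases lt_or_eq_of_le hle with h | h
      · exact h
      · exfalso
        have hxin1 : x ∈ q1 := by
          rw [e1, mem_lastBlock]; exact h
        exact Finset.disjoint_left.1 hqd hxin1 hx
    have hmem : (x.1, f x.1) ∈ q2 := hs2 (mem_blockChoice.2 ⟨hx1, rfl⟩)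
    have hfib := hq2.2 x.1 hx1
    have hxx : x ∈ q2.filter (fun p => p.1 = x.1) := Finset.mem_filter.2 ⟨hx, rfl⟩
    have hyy : (x.1, f x.1) ∈ q2.filter (fun p => p.1 = x.1) :=
      Finset.mem_filter.2 ⟨hmem, rfl⟩
    have := Finset.card_le_one.1 hfib _ hxx _ hyy
    rw [this]
    exact mem_blockChoice.2 ⟨hx1, rfl⟩
  rw [e1, e2]

open Classical in
/-- Forward direction, in the case where the first component has full card. -/
lemma half (hr : 3 ≤ r) {p} (h : Facet2 r p) (h1 : p.1.card = r)
    (h2 : p.1.card + p.2.card = 2 * r - 1) :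
    p.1 = lastBlock r ∧ ∃ f, p.2 = blockChoice r f := by
  have hr1 : 1 ≤ r := by omega
  have hB : p.2.card = r - 1 := by omega
  have hBlt : p.2.card < r := by omega
  have hswap := facet_swap h
  -- fibers of p.2
  have hfib1 : ∀ j : Fin r, (j : ℕ) < r - 1 → (p.2.filter (fun x => x.1 = j)).card = 1 := by
    intro j hj
    have hne : (p.2.filter (fun x => x.1 = j)).Nonempty := facet_hits hr hswap hBlt hj
    have hle := h.1.2.1.2 j hj
    have := Finset.card_pos.2 hne
    omega
  -- sum of fiber cards
  have hsum : p.2.card = ∑ i : Fin r, (p.2.filter (fun x => x.1 = i)).card :=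
    Finset.card_eq_sum_card_fiberwise (fun x _ => Finset.mem_univ x.1)
  have hsplit := Finset.sum_filter_add_sum_filter_not Finset.univ
    (fun j : Fin r => (j : ℕ) < r - 1) (fun i => (p.2.filter (fun x => x.1 = i)).card)
  have hs1 : ∑ i ∈ Finset.univ.filter (fun j : Fin r => (j : ℕ) < r - 1),
      (p.2.filter (fun x => x.1 = i)).card = r - 1 := by
    rw [Finset.sum_congr rfl (fun i hi => hfib1 i (Finset.mem_filter.1 hi).2)]
    simp [Tcard hr1]
  have hLset : Finset.univ.filter (fun j : Fin r => ¬ (j : ℕ) < r - 1)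
      = {(⟨r - 1, by omega⟩ : Fin r)} := by
    ext j
    simp only [Finset.mem_filter, Finset.mem_univ, true_and, Finset.mem_singleton, not_lt]
    have := j.isLt
    constructor
    · intro h; exact Fin.ext (show (j:ℕ) = r - 1 by omega)
    · rintro rfl; exact le_refl _
  have hlastfib : (p.2.filter (fun x => x.1 = (⟨r - 1, by omega⟩ : Fin r))).card = 0 := by
    rw [hLset, Finset.sum_singleton] at hsplit
    omega
  have hnotlast : ∀ x ∈ p.2, (x.1 : ℕ) < r - 1 := by
    intro x hx
    have hle : (x.1 : ℕ) ≤ r - 1 := by have := x.1.isLt; omega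
    rcases lt_or_eq_of_le hle with hlt | heq
    · exact hlt
    · exfalso
      have : x ∈ p.2.filter (fun y => y.1 = (⟨r - 1, by omega⟩ : Fin r)) :=
        Finset.mem_filter.2 ⟨hx, Fin.ext heq⟩
      have := Finset.card_pos.2 ⟨x, this⟩
      omega
  -- p.1 = lastBlock
  have hsub : lastBlock r ⊆ p.1 := by
    intro x hx
    rw [mem_lastBlock] at hx
    have hxeq : x = ((⟨r - 1, by omega⟩ : Fin r), x.2) := Prod.ext (Fin.ext hx) rfl
    have : ((⟨r - 1, by omega⟩ : Fin r), x.2) ∈ p.2 ∪ p.1 := facet_covers hr hswap hBlt x.2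
    rw [Finset.mem_union] at this
    rcases this with h' | h'
    · exfalso; exact absurd (hnotlast _ h') (by simp)
    · rwa [← hxeq] at h'
  have e1 : p.1 = lastBlock r :=
    (Finset.eq_of_subset_of_card_le hsub (by rw [lastBlock_card hr1, h1])).symm
  refine ⟨e1, ?_⟩
  -- build f
  set f : Fin r → Fin r := fun j =>
    if h : ∃ k, ((j, k) : Fin r × Fin r) ∈ p.2 then h.choose else ⟨0, by omega⟩ with hf
  refine ⟨f, ?_⟩
  ext x
  rw [mem_blockChoice]
  constructor
  · intro hx
    refine ⟨hnotlast x hx, ?_⟩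
    have hex : ∃ k, ((x.1, k) : Fin r × Fin r) ∈ p.2 := ⟨x.2, hx⟩
    have hmem : ((x.1, f x.1) : Fin r × Fin r) ∈ p.2 := by
      rw [hf]; simp only [hex, dif_pos]; exact hex.choose_spec
    have hfib := h.1.2.1.2 x.1 (hnotlast x hx)
    have := Finset.card_le_one.1 hfib x (Finset.mem_filter.2 ⟨hx, rfl⟩)
      (x.1, f x.1) (Finset.mem_filter.2 ⟨hmem, rfl⟩)
    exact congrArg Prod.snd this
  · rintro ⟨hx1, hx2⟩
    obtain ⟨y, hy⟩ : (p.2.filter (fun z => z.1 = x.1)).Nonempty := facet_hits hr hswap hBlt hx1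
    rw [Finset.mem_filter] at hy
    have hex : ∃ k, ((x.1, k) : Fin r × Fin r) ∈ p.2 :=
      ⟨y.2, by rw [show ((x.1, y.2) : Fin r × Fin r) = y from Prod.ext hy.2.symm rfl]; exact hy.1⟩
    have hmem : ((x.1, f x.1) : Fin r × Fin r) ∈ p.2 := by
      rw [hf]; simp only [hex, dif_pos]; exact hex.choose_spec
    rw [show x = (x.1, f x.1) from Prod.ext rfl hx2]
    exact hmem

end Main
noncomputable def extFun (r : ℕ) (h0 : 0 < r)
    (g : {j : Fin r // (j : ℕ) < r - 1} → Fin r) : Fin r → Fin r :=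
  fun j => if h : (j : ℕ) < r - 1 then g ⟨j, h⟩ else ⟨0, h0⟩

noncomputable def Phi (r : ℕ) (h0 : 0 < r) :
    Bool × ({j : Fin r // (j : ℕ) < r - 1} → Fin r) →
    Finset (Fin r × Fin r) × Finset (Fin r × Fin r) :=
  fun x => cond x.1 (lastBlock r, blockChoice r (extFun r h0 x.2))
    (blockChoice r (extFun r h0 x.2), lastBlock r)

lemma lb_ne_bc {r : ℕ} (hr1 : 1 ≤ r) (f : Fin r → Fin r) : lastBlock r ≠ blockChoice r f := by
  intro hc
  have := congrArg Finset.card hc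
  rw [lastBlock_card hr1, blockChoice_card hr1] at this
  omega

lemma Phi_injective {r : ℕ} (hr : 3 ≤ r) (h0 : 0 < r) : Function.Injective (Phi r h0) := by
  have hr1 : 1 ≤ r := by omega
  rintro ⟨b, g⟩ ⟨b', g'⟩ hEq
  have hgg : ∀ h : blockChoice r (extFun r h0 g) = blockChoice r (extFun r h0 g'), g = g' := by
    intro hbc
    funext j
    have hm : ((j.1, extFun r h0 g j.1) : Fin r × Fin r) ∈ blockChoice r (extFun r h0 g) :=
      mem_blockChoice.2 ⟨j.2, rfl⟩
    rw [hbc, mem_blockChoice] at hm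
    have h2 := hm.2
    simpa [extFun, j.2] using h2
  cases b <;> cases b'
  · have hbc : blockChoice r (extFun r h0 g) = blockChoice r (extFun r h0 g') :=
      congrArg Prod.fst hEq
    exact congrArg₂ Prod.mk rfl (hgg hbc)
  · have hbc : blockChoice r (extFun r h0 g) = lastBlock r := congrArg Prod.fst hEq
    exact absurd hbc.symm (lb_ne_bc hr1 _)
  · have hbc : lastBlock r = blockChoice r (extFun r h0 g') := congrArg Prod.fst hEq
    exact absurd hbc (lb_ne_bc hr1 _)
  · have hbc : blockChoice r (extFun r h0 g) = blockChoice r (extFun r h0 g') :=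
      congrArg Prod.snd hEq
    exact congrArg₂ Prod.mk rfl (hgg hbc)

/-- The facets of `(M_r)^{*2}_Δ` of dimension `2r-2` (cardinality `2r-1`) are exactly the
faces with all of `{w_1, …, w_r}` in one row and one vertex from each of the first `r-1`
blocks in the other row; there are `2 ⬝ r^{r-1}` of them. -/
theorem stmt5 (r : ℕ) (hr : 3 ≤ r) :
    (∀ p : Finset (Fin r × Fin r) × Finset (Fin r × Fin r),
      (Facet2 r p ∧ p.1.card + p.2.card = 2 * r - 1) ↔
      (∃ f : Fin r → Fin r,
        (p.1 = lastBlock r ∧ p.2 = blockChoice r f) ∨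
        (p.2 = lastBlock r ∧ p.1 = blockChoice r f))) ∧
    {p : Finset (Fin r × Fin r) × Finset (Fin r × Fin r) |
      Facet2 r p ∧ p.1.card + p.2.card = 2 * r - 1}.ncard = 2 * r ^ (r - 1) := by
  have hr1 : 1 ≤ r := by omega
  have h0 : 0 < r := by omega
  have key : ∀ p : Finset (Fin r × Fin r) × Finset (Fin r × Fin r),
      (Facet2 r p ∧ p.1.card + p.2.card = 2 * r - 1) ↔
      (∃ f : Fin r → Fin r,
        (p.1 = lastBlock r ∧ p.2 = blockChoice r f) ∨
        (p.2 = lastBlock r ∧ p.1 = blockChoice r f)) := by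
    intro p
    constructor
    · rintro ⟨hf, hc⟩
      have h1 := hf.1.1.1
      have h2 := hf.1.2.1.1
      have hcase : p.1.card = r ∨ p.2.card = r := by omega
      rcases hcase with h | h
      · obtain ⟨e1, f, e2⟩ := half hr hf h hc
        exact ⟨f, Or.inl ⟨e1, e2⟩⟩
      · obtain ⟨e1, f, e2⟩ := half hr (facet_swap hf) h (by show p.2.card + p.1.card = _; omega)
        exact ⟨f, Or.inr ⟨e1, e2⟩⟩
    · rintro ⟨f, ⟨e1, e2⟩ | ⟨e1, e2⟩⟩
      · constructor
        · rw [show p = (lastBlock r, blockChoice r f) from Prod.ext e1 e2]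
          exact facet_pair hr f
        · rw [e1, e2, lastBlock_card hr1, blockChoice_card hr1]; omega
      · constructor
        · rw [show p = (blockChoice r f, lastBlock r) from Prod.ext e2 e1]
          exact facet_swap (facet_pair hr f)
        · rw [e1, e2, lastBlock_card hr1, blockChoice_card hr1]; omega
  refine ⟨key, ?_⟩
  have hrange : {p : Finset (Fin r × Fin r) × Finset (Fin r × Fin r) |
      Facet2 r p ∧ p.1.card + p.2.card = 2 * r - 1} = Set.range (Phi r h0) := by
    ext p
    rw [Set.mem_setOf_eq, key p]
    constructor
    · rintro ⟨f, ⟨e1, e2⟩ | ⟨e1, e2⟩⟩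
      · refine ⟨(true, fun j => f j.1), ?_⟩
        show (lastBlock r, blockChoice r (extFun r h0 fun j => f j.1)) = p
        have hbc : blockChoice r (extFun r h0 fun j => f j.1) = blockChoice r f :=
          blockChoice_congr (fun j hj => by simp [extFun, hj])
        rw [hbc]
        exact (Prod.ext e1 e2).symm
      · refine ⟨(false, fun j => f j.1), ?_⟩
        show (blockChoice r (extFun r h0 fun j => f j.1), lastBlock r) = p
        have hbc : blockChoice r (extFun r h0 fun j => f j.1) = blockChoice r f :=
          blockChoice_congr (fun j hj => by simp [extFun, hj])
        rw [hbc]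
        exact (Prod.ext e2 e1).symm
    · rintro ⟨⟨b, g⟩, rfl⟩
      cases b
      · exact ⟨extFun r h0 g, Or.inr ⟨rfl, rfl⟩⟩
      · exact ⟨extFun r h0 g, Or.inl ⟨rfl, rfl⟩⟩
  have hD : Fintype.card {j : Fin r // (j : ℕ) < r - 1} = r - 1 := by
    rw [Fintype.card_subtype]
    exact Tcard hr1
  rw [hrange, ← Nat.card_coe_set_eq, Nat.card_range_of_injective (Phi_injective hr h0),
    Nat.card_eq_fintype_card, Fintype.card_prod, Fintype.card_fun, hD, Fintype.card_fin,
    Fintype.card_bool]
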